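/- Under the hypotheses of the confluent Vandermonde inverse bound (nodes on or inside the unit circle, separation ζ), and with ℓ_j replaced by ℓ_j + 1 throughout: the rows v_{j,k} (k = 0, …, ℓ_j) of the inverse Pascal–Vandermonde matrix V(z_1, ℓ_1+1, …, z_K, ℓ_K+1)^{−1} satisfy ‖v_{j,k}‖₁ ≤ C · ζ^{−(R−k)}, where R = Σ_j (ℓ_j + 1) and C is a constant independent of ζ (depending only on ℓ_1, …, ℓ_K). -/

import Mathlib

open Polynomial Finset

noncomputable section PronyAux

def Complex.abs : AbsoluteValue ℂ ℝ := NormedField.toAbsoluteValue ℂ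

lemma Complex.abs_natCast (n : ℕ) : Complex.abs (n : ℂ) = n := by
  show ‖(n : ℂ)‖ = n
  simp

/-- The operator `θ p = X * p'`. -/
def thetaOp : Polynomial ℂ → Polynomial ℂ := fun p => X * derivative p

lemma thetaOp_coeff (p : Polynomial ℂ) (s : ℕ) :
    (thetaOp p).coeff s = (s : ℂ) * p.coeff s := by
  cases s with
  | zero => simp [thetaOp]
  | succ t => simp [thetaOp, coeff_X_mul, coeff_derivative]; ring

lemma thetaOp_iter_coeff (m : ℕ) (p : Polynomial ℂ) (s : ℕ) :
    (thetaOp^[m] p).coeff s = (s : ℂ) ^ m * p.coeff s := by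
  induction m with
  | zero => simp
  | succ m ih =>
    rw [Function.iterate_succ_apply', thetaOp_coeff, ih, pow_succ]; ring

lemma thetaOp_iter_natDegree_le (m : ℕ) (p : Polynomial ℂ) :
    (thetaOp^[m] p).natDegree ≤ p.natDegree := by
  apply natDegree_le_iff_coeff_eq_zero.2
  intro n hn
  rw [thetaOp_iter_coeff, coeff_eq_zero_of_natDegree_lt hn, mul_zero]

lemma thetaOp_iter_C_mul (m : ℕ) (a : ℂ) (p : Polynomial ℂ) :
    thetaOp^[m] (C a * p) = C a * thetaOp^[m] p := by
  ext s
  simp [thetaOp_iter_coeff, coeff_C_mul]; ring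

lemma thetaOp_iter_sum {ι : Type*} (m : ℕ) (t : Finset ι) (f : ι → Polynomial ℂ) :
    thetaOp^[m] (∑ i ∈ t, f i) = ∑ i ∈ t, thetaOp^[m] (f i) := by
  ext s
  simp [thetaOp_iter_coeff, finset_sum_coeff, mul_sum]

lemma pow_dvd_thetaOp_iter {w : ℂ} {n : ℕ} {p : Polynomial ℂ} (m : ℕ)
    (h : (X - C w) ^ n ∣ p) : (X - C w) ^ (n - m) ∣ thetaOp^[m] p := by
  induction m generalizing n p with
  | zero => simpa using h
  | succ m ih =>
    rw [Function.iterate_succ_apply]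
    have h1 : (X - C w) ^ (n - 1) ∣ thetaOp p := by
      obtain ⟨q, rfl⟩ := h
      have : derivative ((X - C w) ^ n * q)
          = (X - C w) ^ (n-1) * (C (n : ℂ) * q) + (X - C w) ^ n * derivative q := by
        rw [derivative_mul, derivative_X_sub_C_pow]; ring
      rw [thetaOp, this]
      rcases Nat.eq_zero_or_pos n with hn | hn
      · simp [hn]
      · have : (X - C w) ^ n = (X - C w) ^ (n-1) * (X - C w) := by
          rw [← pow_succ, Nat.sub_add_cancel hn]
        rw [this]
        apply dvd_mul_of_dvd_right
        apply dvd_add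
        · exact dvd_mul_right _ _
        · exact Dvd.dvd.mul_right (dvd_mul_right _ _) _
    have := ih h1
    rwa [Nat.sub_sub, Nat.add_comm 1 m] at this

lemma eval_thetaOp_iter_eq_zero {w : ℂ} {n : ℕ} {p : Polynomial ℂ} {m : ℕ}
    (h : (X - C w) ^ n ∣ p) (hm : m < n) : eval w (thetaOp^[m] p) = 0 := by
  obtain ⟨q, hq⟩ := pow_dvd_thetaOp_iter m h
  rw [hq, eval_mul, eval_pow, eval_sub, eval_X, eval_C, sub_self,
    zero_pow (by omega), zero_mul]

lemma eval_thetaOp_iter_diag (i : ℕ) (z : ℂ) (g : Polynomial ℂ) :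
    eval z (thetaOp^[i] ((X - C z) ^ i * g)) = z ^ i * (i.factorial : ℂ) * eval z g := by
  induction i generalizing g with
  | zero => simp
  | succ i ih =>
    rw [Function.iterate_succ_apply]
    have key : thetaOp ((X - C z) ^ (i+1) * g)
        = (X - C z) ^ i * (X * (C ((i:ℂ)+1) * g + (X - C z) * derivative g)) := by
      rw [thetaOp, derivative_mul, derivative_X_sub_C_pow]
      push_cast
      ring
    rw [key, ih]
    have : eval z (X * (C ((i:ℂ)+1) * g + (X - C z) * derivative g))
        = ((i:ℂ)+1) * z * eval z g := by
      simp; ring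
    rw [this, Nat.factorial_succ]
    push_cast
    ring

lemma iter_derivative_X_mul (p : ℕ) (q : Polynomial ℂ) :
    derivative^[p] (X * q) = X * derivative^[p] q + (p : ℂ) • derivative^[p-1] q := by
  induction p generalizing q with
  | zero => simp
  | succ p ih =>
    rw [Function.iterate_succ_apply', ih, Function.iterate_succ_apply']
    cases p with
    | zero => simp [derivative_X]; ring
    | succ t =>
      simp only [derivative_add, derivative_mul, derivative_X, derivative_smul, one_mul]
      rw [show (t+1+1) - 1 = t+1 by omega, show (t+1) - 1 = t by omega,
        ← Function.iterate_succ_apply' derivative t q]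
      push_cast
      module

lemma abs_eval_thetaOp_iter_le (m : ℕ) (z : ℂ) (hz : Complex.abs z ≤ 1) :
    ∀ (f : Polynomial ℂ) (M : ℝ),
    (∀ p ≤ m, Complex.abs (eval z (derivative^[p] f)) ≤ M) →
    Complex.abs (eval z (thetaOp^[m] f)) ≤ (m+1).factorial * M := by
  induction m with
  | zero =>
    intro f M hM
    simpa using hM 0 le_rfl
  | succ m ih =>
    intro f M hM
    have hM0 : 0 ≤ M := le_trans (by positivity) (hM 0 (by omega))
    rw [Function.iterate_succ_apply]
    have step : ∀ p ≤ m,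
        Complex.abs (eval z (derivative^[p] (thetaOp f))) ≤ (m+1) * M := by
      intro p hp
      rw [thetaOp, iter_derivative_X_mul]
      have h1 : Complex.abs (eval z (X * derivative^[p] (derivative f))) ≤ M := by
        rw [eval_mul, map_mul, eval_X]
        calc Complex.abs z * Complex.abs (eval z (derivative^[p] (derivative f)))
            ≤ 1 * Complex.abs (eval z (derivative^[p+1] f)) := by
              rw [← Function.iterate_succ_apply derivative p f]
              exact mul_le_mul_of_nonneg_right hz (by positivity)
          _ ≤ M := by rw [one_mul]; exact hM (p+1) (by omega)
      have h2 : Complex.abs (eval z ((p : ℂ) • derivative^[p-1] (derivative f)))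
          ≤ p * M := by
        rw [eval_smul, smul_eq_mul, map_mul, Complex.abs_natCast]
        apply mul_le_mul_of_nonneg_left _ (by positivity)
        cases p with
        | zero => simp; exact hM 1 (by omega)
        | succ t =>
          rw [show t+1-1 = t by omega, ← Function.iterate_succ_apply derivative t f]
          exact hM (t+1) (by omega)
      calc Complex.abs (eval z (X * derivative^[p] (derivative f) + (p:ℂ) • derivative^[p-1] (derivative f)))
          ≤ Complex.abs (eval z (X * derivative^[p] (derivative f)))
            + Complex.abs (eval z ((p:ℂ) • derivative^[p-1] (derivative f))) := by
            rw [eval_add]; exact Complex.abs.add_le _ _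
        _ ≤ M + p * M := add_le_add h1 h2
        _ ≤ (m+1) * M := by nlinarith [hM0, (by exact_mod_cast hp : (p:ℝ) ≤ (m:ℝ))]
    calc Complex.abs (eval z (thetaOp^[m] (thetaOp f)))
        ≤ (m+1).factorial * ((m+1) * M) := ih (thetaOp f) ((m+1) * M) step
      _ ≤ (m+1+1).factorial * M := by
          rw [Nat.factorial_succ (m+1)]
          push_cast
          nlinarith [Nat.one_le_iff_ne_zero.2 (Nat.factorial_ne_zero (m+1)), hM0,
            (by exact_mod_cast Nat.one_le_iff_ne_zero.2 (Nat.factorial_ne_zero (m+1)) : (1:ℝ) ≤ (m+1).factorial)]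

def l1N (N : ℕ) (p : Polynomial ℂ) : ℝ := ∑ s ∈ range N, Complex.abs (p.coeff s)

lemma l1N_nonneg (N : ℕ) (p : Polynomial ℂ) : 0 ≤ l1N N p := by
  unfold l1N; positivity

lemma sum_abs_coeff_le_l1N {t : Finset ℕ} {N : ℕ} (h : ∀ s ∈ t, s < N) (p : Polynomial ℂ) :
    ∑ s ∈ t, Complex.abs (p.coeff s) ≤ l1N N p := by
  apply Finset.sum_le_sum_of_subset_of_nonneg
  · intro s hs; exact mem_range.2 (h s hs)
  · intros; positivity

lemma l1N_mul_le (N : ℕ) (p q : Polynomial ℂ) : l1N N (p * q) ≤ l1N N p * l1N N q := by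
  unfold l1N
  calc ∑ s ∈ range N, Complex.abs ((p * q).coeff s)
      ≤ ∑ s ∈ range N, ∑ x ∈ Finset.HasAntidiagonal.antidiagonal s,
          Complex.abs (p.coeff x.1) * Complex.abs (q.coeff x.2) := by
        apply Finset.sum_le_sum
        intro s _
        rw [coeff_mul]
        refine le_trans (Complex.abs.sum_le _ _) ?_
        apply Finset.sum_le_sum
        intro x _
        rw [map_mul]
    _ = ∑ x ∈ (range N).biUnion (fun s => Finset.HasAntidiagonal.antidiagonal s),
          Complex.abs (p.coeff x.1) * Complex.abs (q.coeff x.2) := by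
        rw [Finset.sum_biUnion]
        intro s1 _ s2 _ hne
        apply Finset.disjoint_left.2
        intro x hx1 hx2
        rw [Finset.HasAntidiagonal.mem_antidiagonal] at hx1 hx2
        exact hne (hx1 ▸ hx2)
    _ ≤ ∑ x ∈ range N ×ˢ range N,
          Complex.abs (p.coeff x.1) * Complex.abs (q.coeff x.2) := by
        apply Finset.sum_le_sum_of_subset_of_nonneg
        · intro x hx
          rw [Finset.mem_biUnion] at hx
          obtain ⟨s, hs, hx⟩ := hx
          rw [Finset.HasAntidiagonal.mem_antidiagonal] at hx
          rw [Finset.mem_product, mem_range, mem_range]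
          rw [mem_range] at hs
          omega
        · intros; positivity
    _ = (∑ s ∈ range N, Complex.abs (p.coeff s)) * ∑ s ∈ range N, Complex.abs (q.coeff s) := by
        rw [Finset.sum_product]
        rw [Finset.sum_mul]
        apply Finset.sum_congr rfl
        intro a _
        rw [Finset.mul_sum]

lemma l1N_sum_le {ι : Type*} (N : ℕ) (t : Finset ι) (f : ι → Polynomial ℂ) :
    l1N N (∑ i ∈ t, f i) ≤ ∑ i ∈ t, l1N N (f i) := by
  unfold l1N
  rw [Finset.sum_comm]
  apply Finset.sum_le_sum
  intro s _
  rw [finset_sum_coeff]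
  exact Complex.abs.sum_le _ _

lemma l1N_C_mul (N : ℕ) (a : ℂ) (p : Polynomial ℂ) :
    l1N N (C a * p) = Complex.abs a * l1N N p := by
  unfold l1N
  rw [Finset.mul_sum]
  apply Finset.sum_congr rfl
  intro s _
  rw [coeff_C_mul, map_mul]

lemma l1N_one (N : ℕ) (hN : 1 ≤ N) : l1N N 1 = 1 := by
  unfold l1N
  rw [show (1 : Polynomial ℂ) = C 1 by simp]
  have : ∀ s ∈ range N, Complex.abs ((C (1:ℂ)).coeff s) = if s = 0 then 1 else 0 := by
    intro s _
    rw [coeff_C]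
    split <;> simp
  rw [Finset.sum_congr rfl this, Finset.sum_ite_eq' (range N) 0 (fun _ => (1:ℝ))]
  simp [Nat.lt_of_lt_of_le Nat.zero_lt_one hN]

lemma l1N_pow_le (N : ℕ) (hN : 1 ≤ N) (p : Polynomial ℂ) (i : ℕ) :
    l1N N (p ^ i) ≤ l1N N p ^ i := by
  induction i with
  | zero => simp [l1N_one N hN]
  | succ i ih =>
    rw [pow_succ, pow_succ]
    calc l1N N (p ^ i * p) ≤ l1N N (p ^ i) * l1N N p := l1N_mul_le _ _ _
      _ ≤ l1N N p ^ i * l1N N p :=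
        mul_le_mul_of_nonneg_right ih (l1N_nonneg _ _)

lemma l1N_prod_le {ι : Type*} (N : ℕ) (hN : 1 ≤ N) (t : Finset ι) (f : ι → Polynomial ℂ) :
    l1N N (∏ i ∈ t, f i) ≤ ∏ i ∈ t, l1N N (f i) := by
  induction t using Finset.cons_induction with
  | empty => rw [Finset.prod_empty, Finset.prod_empty, l1N_one N hN]
  | cons a s ha ih =>
    rw [Finset.prod_cons, Finset.prod_cons]
    calc l1N N (f a * ∏ i ∈ s, f i) ≤ l1N N (f a) * l1N N (∏ i ∈ s, f i) := l1N_mul_le _ _ _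
      _ ≤ l1N N (f a) * ∏ i ∈ s, l1N N (f i) :=
          mul_le_mul_of_nonneg_left ih (l1N_nonneg _ _)

lemma l1N_X_sub_C_le (N : ℕ) (a : ℂ) : l1N N (X - C a) ≤ 1 + Complex.abs a := by
  unfold l1N
  have h1 : ∀ s ∈ range N, Complex.abs ((X - C a).coeff s)
      ≤ ((if s = 1 then (1:ℝ) else 0) + if s = 0 then Complex.abs a else 0) := by
    intro s _
    rw [coeff_sub, coeff_X, coeff_C]
    rcases s with _ | _ | t
    · simp
    · simp
    · simp
  refine le_trans (Finset.sum_le_sum h1) ?_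
  rw [Finset.sum_add_distrib,
    Finset.sum_ite_eq' (range N) 1 (fun _ => (1:ℝ)),
    Finset.sum_ite_eq' (range N) 0 (fun _ => Complex.abs a)]
  split <;> split <;> simp <;> positivity

/-- `derivBound z ζ n B`: all iterated derivatives of `B` at `z` obey `p! n^p ζ⁻ᵖ`. -/
def derivBound (z : ℂ) (ζ : ℝ) (n : ℕ) (B : Polynomial ℂ) : Prop :=
  ∀ p : ℕ, Complex.abs (eval z (derivative^[p] B)) ≤ p.factorial * (n:ℝ)^p * ζ⁻¹^p

lemma derivBound_one (z : ℂ) (ζ : ℝ) : derivBound z ζ 0 1 := by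
  intro p
  cases p with
  | zero => simp
  | succ t =>
    rw [Function.iterate_succ_apply, derivative_one, Function.iterate_fixed derivative_zero]
    simp

lemma sum_pow_le_add_pow (a b : ℝ) (ha : 0 ≤ a) (hb : 0 ≤ b) (p : ℕ) :
    ∑ q ∈ range (p+1), a ^ (p - q) * b ^ q ≤ (a + b) ^ p := by
  rw [add_pow]
  rw [← Finset.sum_range_reflect]
  apply Finset.sum_le_sum
  intro q hq
  rw [mem_range] at hq
  simp only [Nat.add_sub_cancel]
  rw [Nat.sub_sub_self (by omega : q ≤ p)]
  have h1 : (1:ℝ) ≤ (p.choose q : ℝ) := by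
    exact_mod_cast Nat.one_le_iff_ne_zero.2 (Nat.choose_pos (by omega : q ≤ p)).ne'
  nlinarith [mul_nonneg (pow_nonneg ha q) (pow_nonneg hb (p-q))]

lemma derivBound_mul {z : ℂ} {ζ : ℝ} (hζ : 0 < ζ) {n₁ n₂ : ℕ} {B₁ B₂ : Polynomial ℂ}
    (h₁ : derivBound z ζ n₁ B₁) (h₂ : derivBound z ζ n₂ B₂) :
    derivBound z ζ (n₁ + n₂) (B₁ * B₂) := by
  intro p
  rw [Polynomial.iterate_derivative_mul]
  rw [eval_finset_sum]
  refine le_trans (Complex.abs.sum_le _ _) ?_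
  calc ∑ q ∈ range (p+1), Complex.abs (eval z (p.choose q • (derivative^[p - q] B₁ * derivative^[q] B₂)))
      ≤ ∑ q ∈ range (p+1), (p.factorial : ℝ) * ((n₁:ℝ)^(p-q) * (n₂:ℝ)^q) * ζ⁻¹^p := by
        apply Finset.sum_le_sum
        intro q hq
        rw [mem_range] at hq
        rw [nsmul_eq_mul, eval_mul, eval_mul, map_mul, map_mul]
        have hc : Complex.abs ((p.choose q : ℂ[X]).eval z) = (p.choose q : ℝ) := by
          simp [Complex.abs_natCast]
        rw [hc]
        calc (p.choose q : ℝ) * (Complex.abs (eval z (derivative^[p-q] B₁)) * Complex.abs (eval z (derivative^[q] B₂)))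
            ≤ (p.choose q : ℝ) * (((p-q).factorial * (n₁:ℝ)^(p-q) * ζ⁻¹^(p-q)) * (q.factorial * (n₂:ℝ)^q * ζ⁻¹^q)) := by
              apply mul_le_mul_of_nonneg_left _ (by positivity)
              exact mul_le_mul (h₁ (p-q)) (h₂ q) (by positivity) (by positivity)
          _ = ((p.choose q : ℝ) * (p-q).factorial * q.factorial) * ((n₁:ℝ)^(p-q) * (n₂:ℝ)^q) * (ζ⁻¹^(p-q) * ζ⁻¹^q) := by ring
          _ = (p.factorial : ℝ) * ((n₁:ℝ)^(p-q) * (n₂:ℝ)^q) * ζ⁻¹^p := by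
              rw [← pow_add, show p - q + q = p by omega]
              have h2 : (p.choose q : ℝ) * (p-q).factorial * q.factorial = p.factorial := by
                exact_mod_cast congrArg (fun x : ℕ => (x : ℝ))
                  (by rw [mul_right_comm]
                      exact Nat.choose_mul_factorial_mul_factorial (by omega : q ≤ p))
              rw [h2]
    _ = (p.factorial : ℝ) * (∑ q ∈ range (p+1), (n₁:ℝ)^(p-q) * (n₂:ℝ)^q) * ζ⁻¹^p := by
        rw [Finset.mul_sum, Finset.sum_mul]
    _ ≤ (p.factorial : ℝ) * ((n₁:ℝ) + (n₂:ℝ))^p * ζ⁻¹^p := by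
        have h3 := sum_pow_le_add_pow (n₁:ℝ) (n₂:ℝ) (by positivity) (by positivity) p
        gcongr
    _ = p.factorial * ((n₁ + n₂ : ℕ):ℝ)^p * ζ⁻¹^p := by push_cast; ring

lemma derivBound_pow {z : ℂ} {ζ : ℝ} (hζ : 0 < ζ) {n : ℕ} {B : Polynomial ℂ}
    (h : derivBound z ζ n B) (e : ℕ) : derivBound z ζ (e * n) (B ^ e) := by
  induction e with
  | zero => simpa using derivBound_one z ζ
  | succ e ih =>
    have h4 := derivBound_mul hζ ih h
    rw [pow_succ]
    rwa [show e * n + n = (e + 1) * n by ring] at h4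

lemma derivBound_prod {ι : Type*} (t : Finset ι) (z : ℂ) (ζ : ℝ) (hζ : 0 < ζ)
    (n : ι → ℕ) (f : ι → Polynomial ℂ) (hf : ∀ r ∈ t, derivBound z ζ 1 (f r)) :
    derivBound z ζ (∑ r ∈ t, n r) (∏ r ∈ t, f r ^ n r) := by
  induction t using Finset.cons_induction with
  | empty => simpa using derivBound_one z ζ
  | cons a s ha ih =>
    rw [Finset.sum_cons, Finset.prod_cons]
    have h1 := derivBound_pow hζ (hf a (Finset.mem_cons_self a s)) (n a)
    rw [mul_one] at h1
    exact derivBound_mul hζ h1 (ih (fun r hr => hf r (Finset.mem_cons_of_mem hr)))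

lemma derivBound_linear {z : ℂ} {ζ : ℝ} (a b : ℂ)
    (ha : Complex.abs a ≤ ζ⁻¹) (hab : Complex.abs (a * z + b) ≤ 1) :
    derivBound z ζ 1 (C a * X + C b) := by
  intro p
  match p with
  | 0 => simpa using hab
  | 1 =>
    simp only [Function.iterate_one, derivative_add, derivative_C_mul, derivative_X,
      derivative_C, mul_one, add_zero, eval_C, Nat.factorial_one]
    simpa using ha
  | (t+2) =>
    have hd : derivative (derivative (C a * X + C b)) = 0 := by
      simp
    rw [show t+2 = t+1+1 by omega, Function.iterate_succ_apply, Function.iterate_succ_apply, hd,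
      Function.iterate_fixed derivative_zero]
    have h0 : (0:ℝ) ≤ ζ⁻¹ := le_trans (by positivity) ha
    simp only [eval_zero, map_zero]
    exact mul_nonneg (mul_nonneg (by positivity) (by positivity)) (pow_nonneg h0 _)

def triSolve (a : ℕ → ℕ → ℂ) (d : ℕ → ℂ) : ℕ → ℂ
  | i => (a i i)⁻¹ * (d i - ∑ x ∈ (Finset.range i).attach, triSolve a d x.1 * a i x.1)
decreasing_by exact Finset.mem_range.mp x.2

lemma triSolve_eq (a : ℕ → ℕ → ℂ) (d : ℕ → ℂ) (i : ℕ) :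
    triSolve a d i = (a i i)⁻¹ * (d i - ∑ x ∈ Finset.range i, triSolve a d x * a i x) := by
  rw [triSolve]
  congr 1
  rw [sub_right_inj]
  exact Finset.sum_attach (range i) (fun x => triSolve a d x * a i x)

lemma triSolve_spec (a : ℕ → ℕ → ℂ) (d : ℕ → ℂ) (i : ℕ) (h : a i i ≠ 0) :
    ∑ x ∈ range (i+1), triSolve a d x * a i x = d i := by
  rw [Finset.sum_range_succ, triSolve_eq]
  field_simp
  ring

lemma eval_iter_deriv_pow_mul (z : ℂ) (i p : ℕ) (B : Polynomial ℂ) :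
    eval z (derivative^[p] ((X - C z)^i * B)) =
      if i ≤ p then (p.choose i : ℂ) * (i.factorial : ℂ) * eval z (derivative^[p-i] B)
      else 0 := by
  rw [Polynomial.iterate_derivative_mul, eval_finset_sum]
  have hterm : ∀ q, eval z ((p.choose q) • (derivative^[p - q] ((X - C z)^i) * derivative^[q] B))
      = (p.choose q : ℂ) * ((i.descFactorial (p-q) : ℂ) * (0:ℂ)^(i-(p-q))) * eval z (derivative^[q] B) := by
    intro q
    rw [Polynomial.iterate_derivative_X_sub_pow, nsmul_eq_mul, eval_mul, eval_mul,
      nsmul_eq_mul, eval_mul]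
    simp
    ring
  by_cases hip : i ≤ p
  · rw [if_pos hip]
    rw [Finset.sum_eq_single (p - i)]
    · rw [hterm]
      rw [show p - (p - i) = i by omega, Nat.sub_self, pow_zero, Nat.descFactorial_self,
        Nat.choose_symm hip]
      ring
    · intro q hq hne
      rw [hterm]
      rw [mem_range] at hq
      rcases Nat.lt_or_ge q (p - i) with h | h
      · have : i < p - q := by omega
        rw [Nat.descFactorial_eq_zero_iff_lt.2 this]
        simp
      · have h2 : p - q < i := by omega
        rw [zero_pow (by omega : i - (p - q) ≠ 0)]
        ring
    · intro h
      exact absurd (mem_range.2 (by omega)) h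
  · rw [if_neg hip]
    apply Finset.sum_eq_zero
    intro q hq
    rw [hterm]
    rw [mem_range] at hq
    rw [zero_pow (by omega : i - (p - q) ≠ 0)]
    ring
def pronyA (R : ℕ) : ℝ := (R.factorial : ℝ)^2 * (R:ℝ)^R * (2*(R:ℝ))^R + 1
def pronyE (R : ℕ) : ℝ := (R:ℝ) * pronyA R
def pronyC (R : ℕ) : ℝ :=
  2*(R:ℝ)*((R:ℝ) * (pronyE R)^R * 4^R * (2*(R:ℝ))^R + 1) + 1

lemma pronyA_ge_one (R : ℕ) : 1 ≤ pronyA R := by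
  unfold pronyA
  have : (0:ℝ) ≤ (R.factorial : ℝ)^2 * (R:ℝ)^R * (2*(R:ℝ))^R := by positivity
  linarith
lemma pronyC_pos (R : ℕ) : 0 < pronyC R := by
  have h1 : (0:ℝ) ≤ 2*(R:ℝ)*((R:ℝ) * (pronyE R)^R * 4^R * (2*(R:ℝ))^R + 1) := by
    have : (0:ℝ) ≤ pronyE R := by
      unfold pronyE
      have := pronyA_ge_one R
      positivity
    positivity
  unfold pronyC; linarith

set_option maxHeartbeats 2000000 in
lemma prony_row_poly (K : ℕ) (ℓ : Fin K → ℕ) (R : ℕ) (hR : R = ∑ j, (ℓ j + 1))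
    (z : Fin K → ℂ) (hz1 : ∀ j, Complex.abs (z j) = 1) (hinj : Function.Injective z)
    (ζ : ℝ) (hζ : 0 < ζ) (hζR : ζ < 2*R)
    (hsep : ∀ r s : Fin K, r ≠ s → ζ ≤ Complex.abs (z r - z s))
    (j0 : Fin K) (k0 : Fin (ℓ j0 + 1)) :
    ∃ Qp : Polynomial ℂ, Qp.natDegree < R ∧
      (∀ σ : (j : Fin K) × Fin (ℓ j + 1),
        eval (z σ.1) (thetaOp^[(σ.2 : ℕ)] Qp) = if σ = ⟨j0, k0⟩ then 1 else 0) ∧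
      ∑ s ∈ range R, Complex.abs (Qp.coeff s) ≤ pronyC R * (1/ζ) ^ (R - (k0:ℕ)) := by
  classical
  have hR1 : 1 ≤ R := by
    have h2 : ℓ j0 + 1 ≤ ∑ j, (ℓ j + 1) :=
      Finset.single_le_sum (f := fun j => ℓ j + 1) (fun i _ => by omega) (Finset.mem_univ j0)
    omega
  have hk0 : (k0:ℕ) ≤ ℓ j0 := by omega
  have hζi : 0 < ζ⁻¹ := by positivity
  have hζ2R : ζ ≤ 2*(R:ℝ) := le_of_lt hζR
  have h2R1 : (1:ℝ) ≤ 2*(R:ℝ) := by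
    have : (1:ℝ) ≤ (R:ℝ) := by exact_mod_cast hR1
    linarith
  set nj := ∑ r ∈ Finset.univ.erase j0, (ℓ r + 1) with hnj
  have hsplit : (ℓ j0 + 1) + nj = R := by
    rw [hnj, hR]
    exact Finset.add_sum_erase _ (fun r => ℓ r + 1) (Finset.mem_univ j0)
  have hnjR : nj ≤ R := by omega
  have hz0 : z j0 ≠ 0 := by
    intro h
    have := hz1 j0
    rw [h] at this
    simp at this
  set B : Polynomial ℂ :=
    ∏ r ∈ Finset.univ.erase j0, (C ((z j0 - z r)⁻¹) * (X - C (z r))) ^ (ℓ r + 1) with hBdef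
  have hzsub : ∀ r : Fin K, r ≠ j0 → z j0 - z r ≠ 0 := by
    intro r hr
    exact sub_ne_zero.2 (hinj.ne (Ne.symm hr))
  have hBlin : ∀ r ∈ Finset.univ.erase j0,
      derivBound (z j0) ζ 1 (C ((z j0 - z r)⁻¹) * (X - C (z r))) := by
    intro r hr
    rw [Finset.mem_erase] at hr
    have hd : ζ ≤ Complex.abs (z j0 - z r) := hsep j0 r (Ne.symm hr.1)
    have habs : Complex.abs ((z j0 - z r)⁻¹) ≤ ζ⁻¹ := by
      rw [map_inv₀]
      exact inv_anti₀ hζ hd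
    have heq : C ((z j0 - z r)⁻¹) * (X - C (z r))
        = C ((z j0 - z r)⁻¹) * X + C (-((z j0 - z r)⁻¹ * z r)) := by
      rw [mul_sub, ← C_mul, sub_eq_add_neg, ← C_neg]
    rw [heq]
    apply derivBound_linear _ _ habs
    rw [show (z j0 - z r)⁻¹ * z j0 + -((z j0 - z r)⁻¹ * z r)
        = (z j0 - z r)⁻¹ * (z j0 - z r) by ring,
      inv_mul_cancel₀ (hzsub r hr.1)]
    simp
  have hB : derivBound (z j0) ζ nj B := by
    have := derivBound_prod (Finset.univ.erase j0) (z j0) ζ hζ (fun r => ℓ r + 1)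
      (fun r => C ((z j0 - z r)⁻¹) * (X - C (z r))) hBlin
    exact this
  have hBz : eval (z j0) B = 1 := by
    rw [hBdef, eval_prod]
    apply Finset.prod_eq_one
    intro r hr
    rw [Finset.mem_erase] at hr
    rw [eval_pow, eval_mul, eval_C, eval_sub, eval_X, eval_C,
      inv_mul_cancel₀ (hzsub r hr.1), one_pow]
  set aM : ℕ → ℕ → ℂ := fun m i => eval (z j0) (thetaOp^[m] ((X - C (z j0))^i * B)) with haM
  have hdiag : ∀ i, aM i i = z j0 ^ i * i.factorial := by
    intro i
    rw [haM]
    simp only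
    rw [eval_thetaOp_iter_diag, hBz, mul_one]
  have hdne : ∀ i, aM i i ≠ 0 := by
    intro i
    rw [hdiag]
    apply mul_ne_zero (pow_ne_zero _ hz0)
    exact_mod_cast Nat.factorial_ne_zero i
  have htri : ∀ m i, m < i → aM m i = 0 := by
    intro m i h
    exact eval_thetaOp_iter_eq_zero (dvd_mul_right _ _) h
  have habound : ∀ m i, i ≤ m → m + 1 ≤ R →
      Complex.abs (aM m i) ≤ pronyA R * ζ⁻¹ ^ (m - i) := by
    intro m i him hmR
    have hzq : ∀ q : ℕ, (0:ℝ) ≤ ζ⁻¹^q := fun q => pow_nonneg hζi.le q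
    have hnjq : ∀ q : ℕ, (0:ℝ) ≤ ((nj:ℝ))^q := fun q => pow_nonneg (by positivity) q
    have hM0 : ∀ p ≤ m, Complex.abs (eval (z j0) (derivative^[p] ((X - C (z j0))^i * B)))
        ≤ (R.factorial:ℝ) * ((R:ℝ)^R * ((2*(R:ℝ))^R * ζ⁻¹^(m-i))) := by
      intro p hp
      rw [eval_iter_deriv_pow_mul]
      by_cases hip : i ≤ p
      · rw [if_pos hip]
        rw [map_mul, map_mul, Complex.abs_natCast, Complex.abs_natCast]
        have h1 := hB (p - i)
        have hf1 : ((p.choose i : ℝ)) * (i.factorial:ℝ) * ((p-i).factorial : ℝ)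
            = (p.factorial : ℝ) := by
          exact_mod_cast congrArg (fun x : ℕ => (x:ℝ))
            (Nat.choose_mul_factorial_mul_factorial hip)
        have hfm : (p.factorial:ℝ) ≤ (R.factorial:ℝ) := by
          exact_mod_cast Nat.factorial_le (by omega : p ≤ R)
        have hf2 : ((nj:ℝ))^(p-i) ≤ (R:ℝ)^R := by
          calc ((nj:ℝ))^(p-i) ≤ (R:ℝ)^(p-i) :=
                pow_le_pow_left₀ (by positivity) (by exact_mod_cast hnjR) _
            _ ≤ (R:ℝ)^R := pow_le_pow_right₀ (by exact_mod_cast hR1) (by omega)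
        have hf3 : ζ⁻¹^(p-i) ≤ (2*(R:ℝ))^R * ζ⁻¹^(m-i) := by
          have e1 : ζ⁻¹^(p-i) = ζ⁻¹^(m-i) * ζ^(m-p) := by
            rw [show m - i = (p-i) + (m-p) by omega, pow_add, mul_assoc, ← mul_pow,
              inv_mul_cancel₀ (ne_of_gt hζ), one_pow, mul_one]
          rw [e1]
          have e2 : ζ^(m-p) ≤ (2*(R:ℝ))^R := by
            calc ζ^(m-p) ≤ (2*(R:ℝ))^(m-p) := pow_le_pow_left₀ hζ.le hζ2R _
              _ ≤ (2*(R:ℝ))^R := pow_le_pow_right₀ h2R1 (by omega)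
          calc ζ⁻¹^(m-i) * ζ^(m-p) ≤ ζ⁻¹^(m-i) * (2*(R:ℝ))^R :=
                mul_le_mul_of_nonneg_left e2 (by positivity)
            _ = (2*(R:ℝ))^R * ζ⁻¹^(m-i) := mul_comm _ _
        calc (p.choose i : ℝ) * (i.factorial:ℝ) * Complex.abs (eval (z j0) (derivative^[p-i] B))
            ≤ (p.choose i : ℝ) * (i.factorial:ℝ)
                * (((p-i).factorial : ℝ) * ((nj:ℝ))^(p-i) * ζ⁻¹^(p-i)) := by
              rw [mul_assoc, mul_assoc]
              refine mul_le_mul_of_nonneg_left ?_ (by positivity)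
              exact mul_le_mul_of_nonneg_left h1 (by positivity)
          _ = (p.factorial : ℝ) * (((nj:ℝ))^(p-i) * ζ⁻¹^(p-i)) := by
              rw [← hf1]; ring
          _ ≤ (R.factorial:ℝ) * ((R:ℝ)^R * ((2*(R:ℝ))^R * ζ⁻¹^(m-i))) := by
              have t1 : ((nj:ℝ))^(p-i) * ζ⁻¹^(p-i)
                  ≤ (R:ℝ)^R * ((2*(R:ℝ))^R * ζ⁻¹^(m-i)) :=
                mul_le_mul hf2 hf3 (hzq _) (by positivity)
              exact mul_le_mul hfm t1 (mul_nonneg (hnjq _) (hzq _)) (by positivity)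
      · rw [if_neg hip]
        simp only [map_zero]
        exact mul_nonneg (by positivity) (mul_nonneg (by positivity)
          (mul_nonneg (by positivity) (hzq _)))
    have h6 := abs_eval_thetaOp_iter_le m (z j0) (le_of_eq (hz1 j0)) _ _ hM0
    have hfm2 : ((m+1).factorial:ℝ) ≤ (R.factorial:ℝ) := by
      exact_mod_cast Nat.factorial_le (by omega : m + 1 ≤ R)
    refine le_trans h6 ?_
    calc ((m+1).factorial:ℝ) * ((R.factorial:ℝ) * ((R:ℝ)^R * ((2*(R:ℝ))^R * ζ⁻¹^(m-i))))
        ≤ (R.factorial:ℝ) * ((R.factorial:ℝ) * ((R:ℝ)^R * ((2*(R:ℝ))^R * ζ⁻¹^(m-i)))) := by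
          apply mul_le_mul_of_nonneg_right hfm2
          exact mul_nonneg (by positivity) (mul_nonneg (by positivity)
            (mul_nonneg (by positivity) (pow_nonneg hζi.le _)))
      _ = ((R.factorial:ℝ)^2 * (R:ℝ)^R * (2*(R:ℝ))^R) * ζ⁻¹^(m-i) := by ring
      _ ≤ pronyA R * ζ⁻¹^(m-i) := by
          apply mul_le_mul_of_nonneg_right _ (pow_nonneg hζi.le _)
          unfold pronyA
          linarith
  set dd : ℕ → ℂ := fun i => if i = (k0:ℕ) then 1 else 0 with hdd
  set hh : ℕ → ℂ := triSolve aM dd with hhh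
  have hspec : ∀ m, ∑ x ∈ range (m+1), hh x * aM m x = dd m := by
    intro m
    exact triSolve_spec aM dd m (hdne m)
  have hlow : ∀ i, i < (k0:ℕ) → hh i = 0 := by
    intro i
    induction i using Nat.strong_induction_on with
    | _ i ih =>
      intro hi
      rw [hhh, triSolve_eq]
      rw [Finset.sum_eq_zero (fun x hx => by
        have hxi := Finset.mem_range.1 hx
        rw [← hhh, ih x hxi (by omega), zero_mul])]
      rw [hdd]
      simp only
      rw [if_neg (by omega)]
      simp
  have habsd : ∀ i : ℕ, Complex.abs ((aM i i)⁻¹) ≤ 1 := by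
    intro i
    rw [map_inv₀, hdiag i, map_mul, map_pow, hz1 j0, one_pow, one_mul, Complex.abs_natCast]
    rw [inv_le_one_iff₀]
    right
    exact_mod_cast Nat.one_le_iff_ne_zero.2 (Nat.factorial_ne_zero i)
  have hE1 : (1:ℝ) ≤ pronyE R := by
    unfold pronyE
    have h1 : (1:ℝ) ≤ (R:ℝ) := by exact_mod_cast hR1
    nlinarith [pronyA_ge_one R]
  have hA0 : (0:ℝ) ≤ pronyA R := le_trans zero_le_one (pronyA_ge_one R)
  have hE0 : (0:ℝ) ≤ pronyE R := le_trans zero_le_one hE1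
  have hhbound : ∀ i, (k0:ℕ) ≤ i → i ≤ ℓ j0 →
      Complex.abs (hh i) ≤ pronyE R ^ (i - (k0:ℕ)) * ζ⁻¹ ^ (i - (k0:ℕ)) := by
    intro i
    induction i using Nat.strong_induction_on with
    | _ i ih =>
      intro hki hiℓ
      have e1 : hh i = (aM i i)⁻¹ * (dd i - ∑ x ∈ range i, hh x * aM i x) := by
        rw [hhh]
        exact triSolve_eq aM dd i
      by_cases hik : i = (k0:ℕ)
      · have e0 : ∑ x ∈ range i, hh x * aM i x = 0 :=
          Finset.sum_eq_zero (fun x hx => by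
            have hxi := Finset.mem_range.1 hx
            rw [hlow x (by omega), zero_mul])
        rw [e1, e0, sub_zero, hdd]
        simp only
        rw [if_pos hik, show i - (k0:ℕ) = 0 by omega, pow_zero, pow_zero]
        simp only [mul_one]
        exact habsd i
      · have hki' : (k0:ℕ) < i := by omega
        have hdd0 : dd i = 0 := by rw [hdd]; simp only; rw [if_neg hik]
        rw [e1, hdd0, zero_sub, map_mul, map_neg_eq_map]
        have hsum : Complex.abs (∑ x ∈ range i, hh x * aM i x)
            ≤ (R:ℝ) * (pronyA R * pronyE R ^ (i - 1 - (k0:ℕ)) * ζ⁻¹ ^ (i - (k0:ℕ))) := by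
          refine le_trans (Complex.abs.sum_le _ _) ?_
          have hterm : ∀ x ∈ range i, Complex.abs (hh x * aM i x)
              ≤ pronyA R * pronyE R ^ (i - 1 - (k0:ℕ)) * ζ⁻¹ ^ (i - (k0:ℕ)) := by
            intro x hx
            have hxi := Finset.mem_range.1 hx
            by_cases hxk : x < (k0:ℕ)
            · rw [hlow x hxk, zero_mul, map_zero]
              have := pow_nonneg hζi.le (i - (k0:ℕ))
              have := pow_nonneg hE0 (i - 1 - (k0:ℕ))
              positivity
            · push_neg at hxk
              rw [map_mul]
              have hhx := ih x hxi hxk (by omega)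
              have hax := habound i x (by omega) (by omega)
              calc Complex.abs (hh x) * Complex.abs (aM i x)
                  ≤ (pronyE R ^ (x - (k0:ℕ)) * ζ⁻¹ ^ (x - (k0:ℕ)))
                    * (pronyA R * ζ⁻¹ ^ (i - x)) := by
                    exact mul_le_mul hhx hax (by positivity) (by
                      exact mul_nonneg (pow_nonneg hE0 _) (pow_nonneg hζi.le _))
                _ = pronyA R * pronyE R ^ (x - (k0:ℕ)) * (ζ⁻¹ ^ (x - (k0:ℕ)) * ζ⁻¹ ^ (i - x)) := by
                    ring
                _ = pronyA R * pronyE R ^ (x - (k0:ℕ)) * ζ⁻¹ ^ (i - (k0:ℕ)) := by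
                    rw [← pow_add, show x - (k0:ℕ) + (i - x) = i - (k0:ℕ) by omega]
                _ ≤ pronyA R * pronyE R ^ (i - 1 - (k0:ℕ)) * ζ⁻¹ ^ (i - (k0:ℕ)) := by
                    apply mul_le_mul_of_nonneg_right _ (pow_nonneg hζi.le _)
                    exact mul_le_mul_of_nonneg_left
                      (pow_le_pow_right₀ hE1 (by omega)) hA0
          calc ∑ x ∈ range i, Complex.abs (hh x * aM i x)
              ≤ ∑ _x ∈ range i, pronyA R * pronyE R ^ (i - 1 - (k0:ℕ)) * ζ⁻¹ ^ (i - (k0:ℕ)) :=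
                Finset.sum_le_sum hterm
            _ = (i:ℝ) * (pronyA R * pronyE R ^ (i - 1 - (k0:ℕ)) * ζ⁻¹ ^ (i - (k0:ℕ))) := by
                rw [Finset.sum_const, Finset.card_range, nsmul_eq_mul]
            _ ≤ (R:ℝ) * (pronyA R * pronyE R ^ (i - 1 - (k0:ℕ)) * ζ⁻¹ ^ (i - (k0:ℕ))) := by
                refine mul_le_mul_of_nonneg_right ?_ ?_
                · exact_mod_cast (by omega : i ≤ R)
                · have h8 := pow_nonneg hζi.le (i - (k0:ℕ))
                  have h9 := pow_nonneg hE0 (i - 1 - (k0:ℕ))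
                  positivity
        calc Complex.abs ((aM i i)⁻¹) * Complex.abs (∑ x ∈ range i, hh x * aM i x)
            ≤ 1 * ((R:ℝ) * (pronyA R * pronyE R ^ (i - 1 - (k0:ℕ)) * ζ⁻¹ ^ (i - (k0:ℕ)))) := by
              exact mul_le_mul (habsd i) hsum (by positivity) zero_le_one
          _ = pronyE R ^ (i - 1 - (k0:ℕ)) * pronyE R * ζ⁻¹ ^ (i - (k0:ℕ)) := by
              unfold pronyE
              ring
          _ = pronyE R ^ (i - (k0:ℕ)) * ζ⁻¹ ^ (i - (k0:ℕ)) := by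
              rw [← pow_succ, show i - 1 - (k0:ℕ) + 1 = i - (k0:ℕ) by omega]
  set HH : Polynomial ℂ := ∑ i ∈ range (ℓ j0 + 1), C (hh i) * (X - C (z j0))^i with hHH
  refine ⟨HH * B, ?_, ?_, ?_⟩
  · -- degree
    have hdegB : B.natDegree ≤ nj := by
      refine le_trans (natDegree_prod_le _ _) ?_
      apply Finset.sum_le_sum
      intro r hr
      refine le_trans (natDegree_pow_le) ?_
      have h5 : (C ((z j0 - z r)⁻¹) * (X - C (z r))).natDegree ≤ 1 := by
        refine le_trans (natDegree_mul_le) ?_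
        rw [natDegree_C, natDegree_X_sub_C]
      calc (ℓ r + 1) * (C ((z j0 - z r)⁻¹) * (X - C (z r))).natDegree
          ≤ (ℓ r + 1) * 1 := Nat.mul_le_mul_left _ h5
        _ = ℓ r + 1 := mul_one _
    have hdegH : HH.natDegree ≤ ℓ j0 := by
      rw [hHH]
      apply natDegree_sum_le_of_forall_le
      intro i hi
      rw [Finset.mem_range] at hi
      refine le_trans (natDegree_mul_le) ?_
      rw [natDegree_C]
      refine le_trans (Nat.add_le_add_left natDegree_pow_le 0) ?_
      rw [natDegree_X_sub_C]
      omega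
    have := natDegree_mul_le (p := HH) (q := B)
    omega
  · -- interpolation conditions
    have key : ∀ m ≤ ℓ j0, eval (z j0) (thetaOp^[m] (HH * B)) = dd m := by
      intro m hm
      have hQ2 : HH * B = ∑ i ∈ range (ℓ j0 + 1), C (hh i) * ((X - C (z j0))^i * B) := by
        rw [hHH, Finset.sum_mul]
        apply Finset.sum_congr rfl
        intros
        rw [mul_assoc]
      rw [hQ2, thetaOp_iter_sum, eval_finset_sum]
      have hterm : ∀ i ∈ range (ℓ j0 + 1),
          eval (z j0) (thetaOp^[m] (C (hh i) * ((X - C (z j0))^i * B))) = hh i * aM m i := by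
        intro i _
        rw [thetaOp_iter_C_mul, eval_mul, eval_C, haM]
      rw [Finset.sum_congr rfl hterm]
      have hsplit4 : ∑ x ∈ range (ℓ j0 + 1), hh x * aM m x
          = ∑ x ∈ range (m+1), hh x * aM m x
            + ∑ x ∈ Finset.Ico (m+1) (ℓ j0 + 1), hh x * aM m x := by
        rw [Finset.range_eq_Ico,
          ← Finset.sum_Ico_consecutive _ (by omega : 0 ≤ m+1) (by omega : m+1 ≤ ℓ j0+1),
          ← Finset.range_eq_Ico]
      have htail : ∑ x ∈ Finset.Ico (m+1) (ℓ j0 + 1), hh x * aM m x = 0 :=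
        Finset.sum_eq_zero (fun x hx => by
          have hxm := (Finset.mem_Ico.1 hx).1
          rw [htri m x (by omega), mul_zero])
      rw [hsplit4, htail, add_zero]
      exact hspec m
    rintro ⟨j', m'⟩
    by_cases hj : j' = j0
    · subst hj
      have hm' : (m' : ℕ) ≤ ℓ j' := Nat.lt_succ_iff.1 m'.isLt
      rw [key (m' : ℕ) hm', hdd]
      simp only
      by_cases hm : (m' : ℕ) = (k0 : ℕ)
      · have hmk : m' = k0 := Fin.ext hm
        rw [if_pos hm, if_pos (by rw [hmk])]
      · rw [if_neg hm, if_neg]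
        intro hcon
        apply hm
        have h2 := (Sigma.mk.inj_iff.1 hcon).2
        rw [heq_iff_eq] at h2
        rw [h2]
    · rw [if_neg (fun hcon => hj (congrArg Sigma.fst hcon))]
      have hd1 : (X - C (z j')) ^ (ℓ j' + 1) ∣ HH * B := by
        apply dvd_mul_of_dvd_right
        rw [hBdef]
        refine dvd_trans ?_ (Finset.dvd_prod_of_mem _
          (Finset.mem_erase.2 ⟨hj, Finset.mem_univ j'⟩))
        exact pow_dvd_pow_of_dvd (dvd_mul_left _ _) _
      exact eval_thetaOp_iter_eq_zero hd1 m'.isLt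
  · -- coefficient bound
    have hzq : ∀ q : ℕ, (0:ℝ) ≤ ζ⁻¹^q := fun q => pow_nonneg hζi.le q
    have habs2 : ∀ r ∈ Finset.univ.erase j0,
        l1N (R+1) ((C ((z j0 - z r)⁻¹) * (X - C (z r))) ^ (ℓ r + 1)) ≤ (2*ζ⁻¹)^(ℓ r + 1) := by
      intro r hr
      rw [Finset.mem_erase] at hr
      refine le_trans (l1N_pow_le _ (by omega) _ _) ?_
      apply pow_le_pow_left₀ (l1N_nonneg _ _)
      rw [l1N_C_mul]
      have hd : ζ ≤ Complex.abs (z j0 - z r) := hsep j0 r (Ne.symm hr.1)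
      have habs : Complex.abs ((z j0 - z r)⁻¹) ≤ ζ⁻¹ := by
        rw [map_inv₀]
        exact inv_anti₀ hζ hd
      have h2 : l1N (R+1) (X - C (z r)) ≤ 2 := by
        refine le_trans (l1N_X_sub_C_le _ _) ?_
        rw [hz1 r]
        norm_num
      calc Complex.abs ((z j0 - z r)⁻¹) * l1N (R+1) (X - C (z r))
          ≤ ζ⁻¹ * 2 := mul_le_mul habs h2 (l1N_nonneg _ _) hζi.le
        _ = 2*ζ⁻¹ := by ring
    have hl1B : l1N (R+1) B ≤ (2*ζ⁻¹)^nj := by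
      rw [hBdef]
      refine le_trans (l1N_prod_le (R+1) (by omega) _ _) ?_
      refine le_trans (Finset.prod_le_prod (fun r _ => l1N_nonneg _ _) habs2) ?_
      rw [Finset.prod_pow_eq_pow_sum]
    set T2 : ℝ := pronyE R^R * 2^R * ((2*(R:ℝ))^R * ζ⁻¹^(ℓ j0 - (k0:ℕ))) with hT2
    have hT20 : 0 ≤ T2 := by
      rw [hT2]
      exact mul_nonneg (mul_nonneg (pow_nonneg hE0 _) (by positivity))
        (mul_nonneg (by positivity) (hzq _))
    have hl1HH : l1N (R+1) HH ≤ (R:ℝ) * T2 := by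
      rw [hHH]
      refine le_trans (l1N_sum_le _ _ _) ?_
      have hterm : ∀ i ∈ range (ℓ j0 + 1), l1N (R+1) (C (hh i) * (X - C (z j0))^i) ≤ T2 := by
        intro i hi
        have hiℓ : i ≤ ℓ j0 := by
          have := Finset.mem_range.1 hi
          omega
        rw [l1N_C_mul]
        by_cases hik : i < (k0:ℕ)
        · rw [hlow i hik, map_zero, zero_mul]
          exact hT20
        · push_neg at hik
          have h1 := hhbound i hik hiℓ
          have h2 : l1N (R+1) ((X - C (z j0))^i) ≤ 2^i := by
            refine le_trans (l1N_pow_le _ (by omega) _ _) ?_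
            apply pow_le_pow_left₀ (l1N_nonneg _ _)
            refine le_trans (l1N_X_sub_C_le _ _) ?_
            rw [hz1 j0]
            norm_num
          have h3 : ζ⁻¹^(i - (k0:ℕ)) ≤ (2*(R:ℝ))^R * ζ⁻¹^(ℓ j0 - (k0:ℕ)) := by
            have e1 : ζ⁻¹^(i - (k0:ℕ)) = ζ⁻¹^(ℓ j0 - (k0:ℕ)) * ζ^(ℓ j0 - i) := by
              rw [show ℓ j0 - (k0:ℕ) = (i - (k0:ℕ)) + (ℓ j0 - i) by omega, pow_add,
                mul_assoc, ← mul_pow, inv_mul_cancel₀ (ne_of_gt hζ), one_pow, mul_one]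
            rw [e1]
            have e2 : ζ^(ℓ j0 - i) ≤ (2*(R:ℝ))^R := by
              calc ζ^(ℓ j0 - i) ≤ (2*(R:ℝ))^(ℓ j0 - i) := pow_le_pow_left₀ hζ.le hζ2R _
                _ ≤ (2*(R:ℝ))^R := pow_le_pow_right₀ h2R1 (by omega)
            calc ζ⁻¹^(ℓ j0 - (k0:ℕ)) * ζ^(ℓ j0 - i)
                ≤ ζ⁻¹^(ℓ j0 - (k0:ℕ)) * (2*(R:ℝ))^R :=
                  mul_le_mul_of_nonneg_left e2 (hzq _)
              _ = (2*(R:ℝ))^R * ζ⁻¹^(ℓ j0 - (k0:ℕ)) := mul_comm _ _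
          have h4 : pronyE R ^ (i - (k0:ℕ)) ≤ pronyE R ^ R :=
            pow_le_pow_right₀ hE1 (by omega)
          have h5 : (2:ℝ)^i ≤ 2^R := pow_le_pow_right₀ one_le_two (by omega)
          calc Complex.abs (hh i) * l1N (R+1) ((X - C (z j0))^i)
              ≤ (pronyE R ^ (i - (k0:ℕ)) * ζ⁻¹^(i - (k0:ℕ))) * 2^i := by
                refine mul_le_mul h1 h2 (l1N_nonneg _ _) ?_
                exact mul_nonneg (pow_nonneg hE0 _) (hzq _)
            _ ≤ (pronyE R ^ R * ((2*(R:ℝ))^R * ζ⁻¹^(ℓ j0 - (k0:ℕ)))) * 2^R := by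
                refine mul_le_mul ?_ h5 (by positivity) ?_
                · exact mul_le_mul h4 h3 (hzq _) (pow_nonneg hE0 _)
                · exact mul_nonneg (pow_nonneg hE0 _)
                    (mul_nonneg (by positivity) (hzq _))
            _ = T2 := by rw [hT2]; ring
      refine le_trans (Finset.sum_le_sum hterm) ?_
      rw [Finset.sum_const, Finset.card_range, nsmul_eq_mul]
      apply mul_le_mul_of_nonneg_right _ hT20
      exact_mod_cast (by omega : ℓ j0 + 1 ≤ R)
    have step0 : ∑ s ∈ range R, Complex.abs ((HH * B).coeff s) ≤ l1N (R+1) (HH * B) := by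
      unfold l1N
      refine Finset.sum_le_sum_of_subset_of_nonneg (Finset.range_subset_range.2 (by omega)) ?_
      intros
      positivity
    have hpow1 : ζ⁻¹^(ℓ j0 - (k0:ℕ)) * ζ⁻¹^nj = ζ⁻¹^(R - 1 - (k0:ℕ)) := by
      rw [← pow_add, show (ℓ j0 - (k0:ℕ)) + nj = R - 1 - (k0:ℕ) by omega]
    have hpow2 : ζ⁻¹^(R - 1 - (k0:ℕ)) = ζ⁻¹^(R - (k0:ℕ)) * ζ := by
      rw [show R - (k0:ℕ) = (R - 1 - (k0:ℕ)) + 1 by omega, pow_add, pow_one, mul_assoc,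
        inv_mul_cancel₀ (ne_of_gt hζ), mul_one]
    calc ∑ s ∈ range R, Complex.abs ((HH * B).coeff s)
        ≤ l1N (R+1) (HH * B) := step0
      _ ≤ l1N (R+1) HH * l1N (R+1) B := l1N_mul_le _ _ _
      _ ≤ ((R:ℝ) * T2) * (2*ζ⁻¹)^nj := by
          refine mul_le_mul hl1HH hl1B (l1N_nonneg _ _) ?_
          exact mul_nonneg (by positivity) hT20
      _ = (R:ℝ) * pronyE R^R * 2^R * (2*(R:ℝ))^R * 2^nj
            * (ζ⁻¹^(ℓ j0 - (k0:ℕ)) * ζ⁻¹^nj) := by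
          rw [hT2, mul_pow]
          ring
      _ ≤ (R:ℝ) * pronyE R^R * 2^R * (2*(R:ℝ))^R * 2^R * ζ⁻¹^(R - 1 - (k0:ℕ)) := by
          rw [hpow1]
          refine mul_le_mul_of_nonneg_right ?_ (hzq _)
          refine mul_le_mul_of_nonneg_left (pow_le_pow_right₀ one_le_two hnjR) ?_
          have h7 : (0:ℝ) ≤ pronyE R ^ R := pow_nonneg hE0 _
          positivity
      _ = ((R:ℝ) * pronyE R^R * 4^R * (2*(R:ℝ))^R) * (ζ⁻¹^(R - (k0:ℕ)) * ζ) := by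
          have h4R : (4:ℝ)^R = 2^R * 2^R := by
            rw [show (4:ℝ) = 2*2 by norm_num, mul_pow]
          rw [hpow2, h4R]
          ring
      _ ≤ ((R:ℝ) * pronyE R^R * 4^R * (2*(R:ℝ))^R) * (ζ⁻¹^(R - (k0:ℕ)) * (2*(R:ℝ))) := by
          have h7 : (0:ℝ) ≤ pronyE R ^ R := pow_nonneg hE0 _
          refine mul_le_mul_of_nonneg_left ?_ (by positivity)
          exact mul_le_mul_of_nonneg_left hζ2R (hzq _)
      _ ≤ pronyC R * (1/ζ) ^ (R - (k0:ℕ)) := by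
          rw [one_div]
          have h7 : (0:ℝ) ≤ pronyE R ^ R := pow_nonneg hE0 _
          have h8 : (0:ℝ) ≤ (R:ℝ) * pronyE R^R * 4^R * (2*(R:ℝ))^R := by positivity
          have h9 : (0:ℝ) ≤ ζ⁻¹^(R - (k0:ℕ)) := hzq _
          unfold pronyC
          have h10 : (1:ℝ) ≤ (R:ℝ) := by exact_mod_cast hR1
          nlinarith [mul_nonneg h8 h9]

theorem prony_pascal_vandermonde_inverse_rows (K : ℕ) (ℓ : Fin K → ℕ) (R : ℕ)
    (hR : R = ∑ j, (ℓ j + 1)) :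
    ∃ C : ℝ, 0 < C ∧
      ∀ (z : Fin K → ℂ), (∀ j, ‖z j‖ = 1) → Function.Injective z →
      ∀ ζ : ℝ, 0 < ζ → ζ < 2 * R →
      (∀ r s : Fin K, r ≠ s → ζ ≤ ‖z r - z s‖) →
      ∀ (e : ((j : Fin K) × Fin (ℓ j + 1)) ≃ Fin R)
        (V : Matrix (Fin R) (Fin R) ℂ),
      (∀ (k : Fin R) (c : Fin R),
        V k c = z (e.symm c).1 ^ (k : ℕ) * ((k : ℕ) : ℂ) ^ (((e.symm c).2 : ℕ))) →
      ∀ (j : Fin K) (k : Fin (ℓ j + 1)),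
        ∑ s : Fin R, ‖V⁻¹ (e ⟨j, k⟩) s‖ ≤ C * (1 / ζ) ^ (R - (k : ℕ)) := by
  classical
  refine ⟨pronyC R, pronyC_pos R, ?_⟩
  intro z hz1 hinj ζ hζ hζR hsep e V hV j k
  have hex : ∀ σ : (j : Fin K) × Fin (ℓ j + 1), ∃ Qp : Polynomial ℂ, Qp.natDegree < R ∧
      (∀ τ : (j : Fin K) × Fin (ℓ j + 1),
        eval (z τ.1) (thetaOp^[(τ.2 : ℕ)] Qp) = if τ = σ then 1 else 0) ∧
      ∑ s ∈ range R, Complex.abs (Qp.coeff s) ≤ pronyC R * (1/ζ) ^ (R - (σ.2:ℕ)) :=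
    fun σ => prony_row_poly K ℓ R hR z hz1 hinj ζ hζ hζR hsep σ.1 σ.2
  choose Qf hdeg hcond hbound using hex
  set W : Matrix (Fin R) (Fin R) ℂ :=
    Matrix.of (fun r s => (Qf (e.symm r)).coeff (s:ℕ)) with hW
  have hWV : W * V = 1 := by
    ext r c
    rw [Matrix.mul_apply]
    have hcol : ∀ s : Fin R, W r s * V s c
        = (thetaOp^[((e.symm c).2 : ℕ)] (Qf (e.symm r))).coeff (s:ℕ)
          * z (e.symm c).1 ^ (s:ℕ) := by
      intro s
      rw [hV s c, hW]
      simp only [Matrix.of_apply]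
      rw [thetaOp_iter_coeff]
      ring
    rw [Finset.sum_congr rfl (fun s _ => hcol s)]
    have hdeg2 : (thetaOp^[((e.symm c).2:ℕ)] (Qf (e.symm r))).natDegree < R :=
      lt_of_le_of_lt (thetaOp_iter_natDegree_le _ _) (hdeg _)
    rw [Fin.sum_univ_eq_sum_range
      (fun t => (thetaOp^[((e.symm c).2 : ℕ)] (Qf (e.symm r))).coeff t
        * z (e.symm c).1 ^ t) R]
    rw [← eval_eq_sum_range' hdeg2]
    rw [hcond (e.symm r) (e.symm c)]
    rw [Matrix.one_apply]
    by_cases hrc : r = c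
    · rw [if_pos hrc, if_pos (by rw [hrc])]
    · rw [if_neg hrc, if_neg]
      intro hcon
      exact hrc ((Equiv.apply_eq_iff_eq e.symm).1 hcon).symm
  have hVinv : V⁻¹ = W := Matrix.inv_eq_left_inv hWV
  rw [hVinv]
  have hWval : ∀ s : Fin R, W (e ⟨j,k⟩) s = (Qf ⟨j,k⟩).coeff (s:ℕ) := by
    intro s
    rw [hW]
    simp only [Matrix.of_apply, Equiv.symm_apply_apply]
  calc ∑ s : Fin R, Complex.abs (W (e ⟨j,k⟩) s)
      = ∑ s : Fin R, Complex.abs ((Qf ⟨j,k⟩).coeff (s:ℕ)) := by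
        apply Finset.sum_congr rfl
        intro s _
        rw [hWval s]
    _ = ∑ s ∈ range R, Complex.abs ((Qf ⟨j,k⟩).coeff s) :=
        Fin.sum_univ_eq_sum_range (fun t => Complex.abs ((Qf ⟨j,k⟩).coeff t)) R
    _ ≤ pronyC R * (1/ζ) ^ (R - (k:ℕ)) := hbound ⟨j,k⟩
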